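/- Every finite tree with even diameter d ≥ 2 and exactly l ≥ 2 leaves has at most d·l/2 edges. -/

import Mathlib

open SimpleGraph

/-- The number of edges of a simple graph. -/
noncomputable def edgeCount {V : Type*} (G : SimpleGraph V) : ℕ := G.edgeSet.ncard

/-- The degree of a vertex. -/
noncomputable def deg {V : Type*} (G : SimpleGraph V) (v : V) : ℕ := (G.neighborSet v).ncard

/-- The number of leaves (vertices of degree 1). -/
noncomputable def leafCount {V : Type*} (G : SimpleGraph V) : ℕ := {v | deg G v = 1}.ncard

/-- The diameter: the maximum distance between two vertices. -/
noncomputable def treeDiam {V : Type*} (G : SimpleGraph V) : ℕ :=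
  sSup {n | ∃ u v : V, G.dist u v = n}

/-- κ(T) = (number of leaves) + (diameter) - 2. -/
noncomputable def kappa {V : Type*} (G : SimpleGraph V) : ℕ :=
  leafCount G + treeDiam G - 2

/-- A graph is a path graph if it is acyclic, preconnected, and has maximum degree ≤ 2
(the empty graph counts as a path). -/
def IsPathGraph {W : Type*} (H : SimpleGraph W) : Prop :=
  H.IsAcyclic ∧ H.Preconnected ∧
    ∀ v a b c : W, H.Adj v a → H.Adj v b → H.Adj v c → a = b ∨ a = c ∨ b = c

/-- A caterpillar is a tree whose non-leaf vertices induce a path. -/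
def IsCaterpillar {V : Type*} (G : SimpleGraph V) : Prop :=
  G.IsTree ∧ IsPathGraph (G.induce {v | 2 ≤ deg G v})

/-- The quotient graph of `G` along a map `c` on vertices: two images are adjacent iff
they are distinct and some edge of `G` joins their fibers. -/
def quotientGraph {V W : Type*} (G : SimpleGraph V) (c : V → W) : SimpleGraph W where
  Adj a b := a ≠ b ∧ ∃ u v : V, c u = a ∧ c v = b ∧ G.Adj u v
  symm := by
    constructor
    rintro a b ⟨hne, u, v, hu, hv, h⟩
    exact ⟨hne.symm, v, u, hv, hu, h.symm⟩
  loopless := by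
    constructor
    rintro a ⟨hne, -⟩
    exact hne rfl

/-- A spider is a tree with at most one vertex of degree greater than 2. -/
def IsSpider {V : Type*} (G : SimpleGraph V) : Prop :=
  G.IsTree ∧ ∀ u v : V, 3 ≤ deg G u → 3 ≤ deg G v → u = v

/-- `k` is the maximum number of edges of a vertex-induced subgraph of `G`
that is a caterpillar. -/
def MaxInducedCaterpillar {V : Type*} (G : SimpleGraph V) (k : ℕ) : Prop :=
  IsGreatest {j : ℕ | ∃ s : Set V, IsCaterpillar (G.induce s) ∧ edgeCount (G.induce s) = j} k

set_option linter.unusedSectionVars false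

namespace TreeAux
open Walk
variable {V : Type*} [DecidableEq V] {G : SimpleGraph V}

lemma getVert_mem_support {a b : V} (p : G.Walk a b) (i : ℕ) :
    p.getVert i ∈ p.support := by
  induction p generalizing i with
  | nil => simp [Walk.getVert]
  | cons h q ih =>
    cases i with
    | zero => simp
    | succ n => rw [getVert_cons_succ]; simp [ih]

lemma dist_getVert_le (hc : G.Connected) {a b : V} (p : G.Walk a b) (i : ℕ) :
    G.dist a (p.getVert i) ≤ i := by
  induction p generalizing i with
  | nil => simp [Walk.getVert, dist_self]
  | @cons a w b h q ih =>
    cases i with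
    | zero => simp [dist_self]
    | succ n =>
      rw [getVert_cons_succ]
      calc G.dist a (q.getVert n) ≤ G.dist a w + G.dist w (q.getVert n) := hc.dist_triangle
        _ ≤ 1 + n := by
            have h1 : G.dist a w ≤ (Walk.cons h Walk.nil).length := dist_le _
            simp at h1
            have := ih n
            omega
        _ = n + 1 := by omega

lemma dist_getVert_le' {a b : V} (p : G.Walk a b) (i : ℕ) :
    G.dist (p.getVert i) b ≤ p.length - i := by
  induction p generalizing i with
  | nil => simp [Walk.getVert, dist_self]
  | @cons a w b h q ih =>
    cases i with
    | zero =>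
      simpa using dist_le (Walk.cons h q)
    | succ n =>
      rw [getVert_cons_succ]
      have := ih n
      simp only [Walk.length_cons]
      omega

/-- split lemma for shortest walks -/
lemma split_dist (hc : G.Connected) {a b x : V} (p : G.Walk a b)
    (hp : p.length = G.dist a b) (hx : x ∈ p.support) :
    G.dist a x = (p.takeUntil x hx).length ∧ G.dist x b = (p.dropUntil x hx).length := by
  have h1 : G.dist a x ≤ (p.takeUntil x hx).length := dist_le _
  have h2 : G.dist x b ≤ (p.dropUntil x hx).length := dist_le _
  have h3 : (p.takeUntil x hx).length + (p.dropUntil x hx).length = p.length := by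
    rw [← Walk.length_append, Walk.take_spec]
  have h4 : G.dist a b ≤ G.dist a x + G.dist x b := hc.dist_triangle
  omega

lemma dist_add_of_mem (hc : G.Connected) {a b x : V} (p : G.Walk a b)
    (hp : p.length = G.dist a b) (hx : x ∈ p.support) :
    G.dist a x + G.dist x b = G.dist a b := by
  have h := split_dist hc p hp hx
  have h3 : (p.takeUntil x hx).length + (p.dropUntil x hx).length = p.length := by
    rw [← Walk.length_append, Walk.take_spec]
  omega

/-- on a shortest walk, distances from the start determine relative distance -/
lemma dist_on_shortest (hc : G.Connected) {a b x y : V} (p : G.Walk a b)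
    (hp : p.length = G.dist a b) (hx : x ∈ p.support) (hy : y ∈ p.support)
    (hxy : G.dist a x ≤ G.dist a y) :
    G.dist x y = G.dist a y - G.dist a x := by
  have hsx := split_dist hc p hp hx
  have hy' : y ∈ ((p.takeUntil x hx).append (p.dropUntil x hx)).support := by
    rw [Walk.take_spec]; exact hy
  rw [Walk.mem_support_append_iff] at hy'
  rcases hy' with hy1 | hy2
  · -- y on the first part
    have ht : (p.takeUntil x hx).length = G.dist a x := hsx.1.symm
    have := dist_add_of_mem hc (p.takeUntil x hx) ht hy1
    have h0 : G.dist y x = 0 := by omega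
    have hxy0 : G.dist x y = 0 := by rwa [dist_comm] at h0
    omega
  · -- y on the second part
    have hs : (p.dropUntil x hx).length = G.dist x b := hsx.2.symm
    have h1 := dist_add_of_mem hc (p.dropUntil x hx) hs hy2
    have h2 := dist_add_of_mem hc p hp hy
    have h3 := dist_add_of_mem hc p hp hx
    omega

lemma eq_on_shortest (hc : G.Connected) {a b x y : V} (p : G.Walk a b)
    (hp : p.length = G.dist a b) (hx : x ∈ p.support) (hy : y ∈ p.support)
    (hxy : G.dist a x = G.dist a y) : x = y := by
  have := dist_on_shortest hc p hp hx hy (le_of_eq hxy)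
  have h0 : G.dist x y = 0 := by omega
  have := hc x y
  rw [(hc x y).dist_eq_zero_iff] at h0
  exact h0



/-- In a tree, any path realizes the distance. -/
lemma path_length_eq_dist (hT : G.IsTree) {a b : V} (p : G.Walk a b) (hp : p.IsPath) :
    p.length = G.dist a b := by
  obtain ⟨q, hq, hql⟩ := hT.isConnected.exists_path_of_dist a b
  have : (⟨p, hp⟩ : G.Path a b) = ⟨q, hq⟩ := hT.IsAcyclic.path_unique _ _
  have hpq : p = q := congrArg Subtype.val this
  rw [hpq, hql]

/-- Appending two paths that share only the middle vertex gives a path. -/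
lemma isPath_append {a b c : V} {p : G.Walk a b} {q : G.Walk b c}
    (hp : p.IsPath) (hq : q.IsPath)
    (h : ∀ y, y ∈ p.support → y ∈ q.support → y = b) : (p.append q).IsPath := by
  rw [Walk.isPath_def, Walk.support_append, List.nodup_append]
  refine ⟨hp.support_nodup, ?_, ?_⟩
  · exact hq.support_nodup.tail
  · intro y hyp y' hyq hyy
    subst hyy
    have hyq' : y ∈ q.support := List.mem_of_mem_tail hyq
    have hyb : y = b := h y hyp hyq'
    subst hyb
    have : q.support.Nodup := hq.support_nodup
    rw [Walk.support_eq_cons] at this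
    exact (List.nodup_cons.mp this).1 hyq

/-- Split a walk at the first vertex belonging to `S`. -/
lemma first_split {a b : V} (p : G.Walk a b) (S : Set V) (hb : b ∈ S) :
    ∃ (z : V) (q : G.Walk a z) (r : G.Walk z b),
      z ∈ S ∧ q.append r = p ∧ ∀ y ∈ q.support, y ∈ S → y = z := by
  induction p with
  | nil => exact ⟨_, Walk.nil, Walk.nil, hb, rfl, fun y hy _ => by simpa using hy⟩
  | @cons a w b h q ih =>
    by_cases ha : a ∈ S
    · exact ⟨a, Walk.nil, Walk.cons h q, ha, rfl, by simp⟩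
    · obtain ⟨z, q', r, hz, happ, hfirst⟩ := ih hb
      refine ⟨z, Walk.cons h q', r, hz, by rw [Walk.cons_append, happ], ?_⟩
      intro y hy hyS
      rw [Walk.support_cons, List.mem_cons] at hy
      rcases hy with rfl | hy
      · exact absurd hyS ha
      · exact hfirst y hy hyS

lemma exists_center (hT : G.IsTree) {u v : V} {k : ℕ}
    (huv : G.dist u v = 2 * k) (hmax : ∀ x y : V, G.dist x y ≤ 2 * k) :
    ∃ c : V, ∀ w : V, G.dist c w ≤ k := by
  have hc := hT.isConnected
  obtain ⟨P, hP, hPl⟩ := hc.exists_path_of_dist u v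
  set c := P.getVert k with hcdef
  have hcs : c ∈ P.support := getVert_mem_support P k
  have h1 : G.dist u c ≤ k := dist_getVert_le hc P k
  have h2 : G.dist c v ≤ P.length - k := dist_getVert_le' P k
  have h3 : G.dist u v ≤ G.dist u c + G.dist c v := hc.dist_triangle
  have huc : G.dist u c = k := by omega
  refine ⟨c, fun w => ?_⟩
  obtain ⟨Q0, hQ0, _⟩ := hc.exists_path_of_dist w c
  obtain ⟨z, q, r, hz, happ, hfirst⟩ := first_split Q0 {x | x ∈ P.support} hcs
  have hq : q.IsPath := by
    rw [← happ] at hQ0; exact hQ0.of_append_left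
  have hzP : z ∈ P.support := hz
  -- d u w = d u z + q.length
  have hsplit := split_dist hc P hPl hzP
  have hA : ((P.takeUntil z hzP).append q.reverse).IsPath := by
    refine isPath_append (hP.takeUntil hzP) hq.reverse ?_
    intro y hy1 hy2
    rw [Walk.support_reverse, List.mem_reverse] at hy2
    exact hfirst y hy2 (P.support_takeUntil_subset hzP hy1)
  have hduw : G.dist u w = G.dist u z + q.length := by
    have := path_length_eq_dist hT _ hA
    rw [Walk.length_append, Walk.length_reverse] at this
    have hs1 := hsplit.1
    omega
  have hB : ((P.dropUntil z hzP).reverse.append q.reverse).IsPath := by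
    refine isPath_append (hP.dropUntil hzP).reverse hq.reverse ?_
    intro y hy1 hy2
    rw [Walk.support_reverse, List.mem_reverse] at hy1 hy2
    exact hfirst y hy2 (P.support_dropUntil_subset hzP hy1)
  have hdvw : G.dist v w = G.dist z v + q.length := by
    have := path_length_eq_dist hT _ hB
    rw [Walk.length_append, Walk.length_reverse, Walk.length_reverse] at this
    have hs2 := hsplit.2
    omega
  have hzw : G.dist z w ≤ q.length := by
    have := dist_le q.reverse
    rwa [Walk.length_reverse] at this
  have htr : G.dist c w ≤ G.dist c z + G.dist z w := hc.dist_triangle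
  have hsum : G.dist u z + G.dist z v = G.dist u v := dist_add_of_mem hc P hPl hzP
  have huw2k : G.dist u w ≤ 2 * k := hmax u w
  have hvw2k : G.dist v w ≤ 2 * k := hmax v w
  rcases le_or_gt (G.dist u z) k with hle | hlt
  · have hzc : G.dist z c = G.dist u c - G.dist u z :=
      dist_on_shortest hc P hPl hzP hcs (by omega)
    have : G.dist c z = G.dist z c := dist_comm
    omega
  · have hcz : G.dist c z = G.dist u z - G.dist u c :=
      dist_on_shortest hc P hPl hcs hzP (by omega)
    omega

lemma exists_leaf_beyond (hT : G.IsTree) [Fintype V] (c v : V) (hv : v ≠ c) :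
    ∃ ℓ : V, (G.neighborSet ℓ).ncard = 1 ∧
      G.dist c ℓ = G.dist c v + G.dist v ℓ := by
  have hc := hT.isConnected
  set S : Set V := {w | G.dist c w = G.dist c v + G.dist v w} with hSdef
  have hvS : v ∈ S := by simp [hSdef, dist_self]
  obtain ⟨ℓ, hℓS, hmax⟩ := Set.exists_max_image S (fun w => G.dist c w) (Set.toFinite S) ⟨v, hvS⟩
  have hdcv : 1 ≤ G.dist c v := hc.pos_dist_of_ne (Ne.symm hv)
  have hℓeq : G.dist c ℓ = G.dist c v + G.dist v ℓ := hℓS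
  have hdcl : 1 ≤ G.dist c ℓ := by omega
  obtain ⟨P, hP, hPl⟩ := hc.exists_path_of_dist c ℓ
  have hlen : 1 ≤ P.length := by omega
  set p0 := P.getVert (P.length - 1) with hp0def
  have hip : P.length - 1 < P.length := by omega
  have hadj : G.Adj p0 ℓ := by
    have := P.adj_getVert_succ hip
    rwa [show P.length - 1 + 1 = P.length by omega, Walk.getVert_length] at this
  have hfin : (G.neighborSet ℓ).Finite := Set.toFinite _
  have hne : 0 < (G.neighborSet ℓ).ncard := by
    rw [Set.ncard_pos hfin]
    exact ⟨p0, hadj.symm⟩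
  refine ⟨ℓ, ?_, hℓeq⟩
  by_contra hcon
  have h2 : 1 < (G.neighborSet ℓ).ncard := by omega
  obtain ⟨x, hxmem, hxne⟩ := Set.exists_ne_of_one_lt_ncard h2 p0
  have hxl : G.Adj ℓ x := hxmem
  have hdxl : G.dist x ℓ = 1 := dist_eq_one_iff_adj.mpr hxl.symm
  by_cases hxP : x ∈ P.support
  · have hsum : G.dist c x + G.dist x ℓ = G.dist c ℓ := dist_add_of_mem hc P hPl hxP
    have hp0s : p0 ∈ P.support := getVert_mem_support P _
    have hd1 : G.dist c p0 ≤ P.length - 1 := dist_getVert_le hc P _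
    have hd2 : G.dist p0 ℓ = 1 := dist_eq_one_iff_adj.mpr hadj
    have hd3 : G.dist c ℓ ≤ G.dist c p0 + G.dist p0 ℓ := hc.dist_triangle
    have hdp0 : G.dist c p0 = P.length - 1 := by omega
    have : x = p0 := eq_on_shortest hc P hPl hxP hp0s (by omega)
    exact hxne this
  · have hW : (Walk.cons hxl.symm P.reverse).IsPath := by
      rw [Walk.cons_isPath_iff]
      refine ⟨hP.reverse, ?_⟩
      rwa [Walk.support_reverse, List.mem_reverse]
    have hdxc : G.dist x c = P.length + 1 := by
      have := path_length_eq_dist hT _ hW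
      simp only [Walk.length_cons, Walk.length_reverse] at this
      omega
    have hdcx : G.dist c x = G.dist c ℓ + 1 := by
      rw [dist_comm]; omega
    have ht1 : G.dist c x ≤ G.dist c v + G.dist v x := hc.dist_triangle
    have ht2 : G.dist v x ≤ G.dist v ℓ + G.dist ℓ x := hc.dist_triangle
    have hdlx : G.dist ℓ x = 1 := by rw [dist_comm]; omega
    have hxS : x ∈ S := by
      simp only [hSdef, Set.mem_setOf_eq]
      omega
    have := hmax x hxS
    omega

lemma between_inj (hT : G.IsTree) {c ℓ v v' : V}
    (h1 : G.dist c ℓ = G.dist c v + G.dist v ℓ)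
    (h2 : G.dist c ℓ = G.dist c v' + G.dist v' ℓ)
    (he : G.dist c v = G.dist c v') : v = v' := by
  have hc := hT.isConnected
  obtain ⟨Q1, hQ1⟩ := hc.exists_walk_length_eq_dist c v
  obtain ⟨Q2, hQ2⟩ := hc.exists_walk_length_eq_dist v ℓ
  obtain ⟨Q1', hQ1'⟩ := hc.exists_walk_length_eq_dist c v'
  obtain ⟨Q2', hQ2'⟩ := hc.exists_walk_length_eq_dist v' ℓ
  have hW : (Q1.append Q2).IsPath := by
    apply Walk.isPath_of_length_eq_dist
    rw [Walk.length_append]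
    omega
  have hW' : (Q1'.append Q2').IsPath := by
    apply Walk.isPath_of_length_eq_dist
    rw [Walk.length_append]
    omega
  have heq : Q1.append Q2 = Q1'.append Q2' := by
    have : (⟨Q1.append Q2, hW⟩ : G.Path c ℓ) = ⟨Q1'.append Q2', hW'⟩ :=
      hT.IsAcyclic.path_unique _ _
    exact congrArg Subtype.val this
  have hv : (Q1.append Q2).getVert Q1.length = v := by
    rw [Walk.getVert_append]
    simp
  have hv' : (Q1'.append Q2').getVert Q1'.length = v' := by
    rw [Walk.getVert_append]
    simp
  rw [← hv, ← hv', heq, hQ1, hQ1', he]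


end TreeAux

/-- Every finite tree with even diameter `d ≥ 2` and exactly `l ≥ 2` leaves
has at most `d·l/2` edges. -/


theorem tree_edge_bound_even_diam
    {V : Type*} [Fintype V] (G : SimpleGraph V) (hG : G.IsTree)
    (d l : ℕ) (hdeven : Even d) (hd : 2 ≤ d) (hl : 2 ≤ l)
    (hdiam : treeDiam G = d) (hleaf : leafCount G = l) :
    edgeCount G ≤ d * l / 2 := by
  classical
  have hc := hG.isConnected
  have hne : Nonempty V := hc.nonempty
  obtain ⟨k, hk⟩ := hdeven
  have hd2 : d = 2 * k := by omega
  have hk1 : 1 ≤ k := by omega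
  -- the diameter is attained and bounds all distances
  have hbdd : BddAbove {n | ∃ u v : V, G.dist u v = n} := by
    refine ⟨Fintype.card V, fun n hn => ?_⟩
    obtain ⟨u, v, huv⟩ := hn
    obtain ⟨p, hp, hpl⟩ := hc.exists_path_of_dist u v
    have := hp.length_lt
    omega
  have hmax : ∀ x y : V, G.dist x y ≤ 2 * k := by
    intro x y
    have : G.dist x y ≤ treeDiam G := le_csSup hbdd ⟨x, y, rfl⟩
    omega
  have hmem : treeDiam G ∈ {n | ∃ u v : V, G.dist u v = n} := by
    apply Nat.sSup_mem _ hbdd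
    exact ⟨0, Classical.arbitrary V, Classical.arbitrary V, dist_self⟩
  obtain ⟨u, v, huv⟩ := hmem
  have huv2k : G.dist u v = 2 * k := by omega
  obtain ⟨c, hcenter⟩ := TreeAux.exists_center hG huv2k hmax
  -- pick a leaf beyond each vertex
  have hB : ∀ w : V, w ≠ c → ∃ ℓ : V, (G.neighborSet ℓ).ncard = 1 ∧
      G.dist c ℓ = G.dist c w + G.dist w ℓ :=
    fun w hw => TreeAux.exists_leaf_beyond hG c w hw
  choose! f hf1 hf2 using hB
  set s : Set V := {w : V | w ≠ c} with hsdef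
  set L : Set V := {w : V | deg G w = 1} with hLdef
  set t : Set (V × ℕ) := L ×ˢ Set.Icc 1 k with htdef
  have hmaps : ∀ w ∈ s, (f w, G.dist c w) ∈ t := by
    intro w hw
    have hw' : w ≠ c := hw
    refine ⟨hf1 w hw', ?_, hcenter w⟩
    exact hc.pos_dist_of_ne (Ne.symm hw')
  have hinj : Set.InjOn (fun w => (f w, G.dist c w)) s := by
    intro w hw w' hw' heq
    simp only [Prod.mk.injEq] at heq
    have h1 := hf2 w hw
    have h2 := hf2 w' hw'
    rw [heq.1] at h1
    exact TreeAux.between_inj hG h1 h2 heq.2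
  have htfin : t.Finite := (Set.toFinite L).prod (Set.toFinite _)
  have hcard : s.ncard ≤ t.ncard :=
    Set.ncard_le_ncard_of_injOn _ hmaps hinj htfin
  -- compute t.ncard
  have htn : t.ncard = l * k := by
    have e1 : t.ncard = Nat.card t := rfl
    have e2 : Nat.card t = Nat.card (↥L × ↥(Set.Icc 1 k)) :=
      Nat.card_congr (Equiv.Set.prod L (Set.Icc 1 k))
    rw [e1, e2, Nat.card_prod]
    have hI : Nat.card ↥(Set.Icc 1 k) = k := by
      rw [Nat.card_coe_set_eq, ← Finset.coe_Icc, Set.ncard_coe_finset, Nat.card_Icc]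
      omega
    have hL : Nat.card ↥L = l := by
      rw [Nat.card_coe_set_eq]
      exact hleaf
    rw [hI, hL]
  -- compute s.ncard
  have hsn : s.ncard = Fintype.card V - 1 := by
    have h1 : s = ({c} : Set V)ᶜ := by
      ext w; simp [hsdef]
    have h2 := Set.ncard_add_ncard_compl ({c} : Set V)
    rw [h1]
    rw [Set.ncard_singleton] at h2
    rw [Nat.card_eq_fintype_card] at h2
    omega
  -- edge count
  haveI : Fintype ↥G.edgeSet := Fintype.ofFinite _
  have hec' : G.edgeFinset.card + 1 = Fintype.card V := hG.card_edgeFinset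
  have hec : edgeCount G = G.edgeFinset.card := by
    rw [edgeCount, Set.ncard_eq_toFinset_card']
    congr 1
  have hcV : 1 ≤ Fintype.card V := Fintype.card_pos
  have hcomm : l * k = k * l := Nat.mul_comm _ _
  have hfinal : edgeCount G ≤ k * l := by omega
  have hdl : d * l = 2 * (k * l) := by rw [hd2]; ring
  rw [hdl, Nat.mul_div_cancel_left _ (by norm_num : 0 < 2)]
  omega
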